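/- Let L₁ = N ⋊_φ H and L₂ = N ⋊_ψ H be semidirect product loops with ker(φ) = {1} = ker(ψ), where N is a group. If φ(H) and ψ(H) are conjugate subgroups in Aut(N), then L₁ is isomorphic to L₂ as loops. -/

import Mathlib

/-- Multiplication of the semidirect product `N ⋊_φ H` where the action
is by automorphisms of the group `N`:
`(n₁,h₁)·(n₂,h₂) = (n₁·φ(h₁)(n₂), h₁h₂)`. -/
def sdMulA {N H : Type*} [Group N] [Group H] (φ : H →* MulAut N)
    (p q : N × H) : N × H :=
  (p.1 * φ p.2 q.1, p.2 * q.2)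

theorem stmt15 {N H : Type*} [Group N] [Group H] (φ ψ : H →* MulAut N)
    (hφ : Function.Injective φ)   -- ker φ = {1}
    (hψ : Function.Injective ψ)   -- ker ψ = {1}
    -- φ(H) and ψ(H) are conjugate in Aut(N)
    (hconj : ∃ α : MulAut N, ∀ σ : MulAut N,
      σ ∈ φ.range ↔ α * σ * α⁻¹ ∈ ψ.range) :
    -- L₁ ≃ L₂ as loops
    ∃ F : N × H ≃ N × H, ∀ p q : N × H,
      F (sdMulA φ p q) = sdMulA ψ (F p) (F q) := by
  obtain ⟨α, hα⟩ := hconj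
  have key : ∀ h : H, ∃ h' : H, ψ h' = α * φ h * α⁻¹ := by
    intro h
    obtain ⟨h', hh'⟩ := (hα (φ h)).mp ⟨h, rfl⟩
    exact ⟨h', hh'⟩
  set θ : H → H := fun h => (key h).choose with hθdef
  have hθ : ∀ h, ψ (θ h) = α * φ h * α⁻¹ := fun h => (key h).choose_spec
  have θinj : Function.Injective θ := by
    intro a b hab
    apply hφ
    have := (hθ a).symm.trans ((congrArg ψ hab).trans (hθ b))
    group at this
    -- this : α * φ a * α⁻¹ = α * φ b * α⁻¹
    have := mul_left_cancel ((mul_right_cancel this))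
    exact this
  have θsurj : Function.Surjective θ := by
    intro h'
    have hmem : α * (α⁻¹ * ψ h' * α) * α⁻¹ ∈ ψ.range := by
      refine ⟨h', ?_⟩
      group
    obtain ⟨h, hh⟩ := (hα _).mpr hmem
    refine ⟨h, hψ ?_⟩
    rw [hθ h, hh]
    group
  refine ⟨Equiv.prodCongr α.toEquiv (Equiv.ofBijective θ ⟨θinj, θsurj⟩), ?_⟩
  rintro ⟨n₁, h₁⟩ ⟨n₂, h₂⟩
  have hθmul : θ (h₁ * h₂) = θ h₁ * θ h₂ := by
    apply hψ
    rw [map_mul, hθ, hθ, hθ, map_mul]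
    group
  simp only [sdMulA, Equiv.prodCongr_apply, Prod.map, Equiv.ofBijective_apply,
    MulEquiv.coe_toEquiv, map_mul, hθmul]
  refine Prod.ext ?_ (by exact hθmul)
  simp only [Prod.fst]
  have := congrArg (fun σ : MulAut N => σ (α n₂)) (hθ h₁)
  show α (n₁ * (φ h₁) n₂) = α n₁ * (ψ (θ h₁)) (α n₂)
  simpa using this.symm
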